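/- Let n ≥ 2 and let z : Fin n → ℂ be admissible with Δ(z) = Δmax(n) (a maximizer). Then for every index k there exists an index j ≠ k with dist (z k) (z j) = 2. -/

import Mathlib

open Finset Metric Set Function

/-- The product over all ordered pairs `(i,j)` with `i ≠ j` of `dist (z i) (z j)`. -/
noncomputable def Delta (n : ℕ) (z : Fin n → ℂ) : ℝ :=
  ∏ p ∈ Finset.univ.filter (fun p : Fin n × Fin n => p.1 ≠ p.2), dist (z p.1) (z p.2)

/-- `z` is admissible if all pairwise distances are at most 2. -/
def Admissible (n : ℕ) (z : Fin n → ℂ) : Prop :=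
  ∀ i j, dist (z i) (z j) ≤ 2

/-- The maximal discriminant over admissible configurations. -/
noncomputable def Dmax (n : ℕ) : ℝ :=
  sSup {d : ℝ | ∃ z : Fin n → ℂ, Admissible n z ∧ Delta n z = d}

lemma bddAboveSet (n : ℕ) :
    BddAbove {d : ℝ | ∃ z : Fin n → ℂ, Admissible n z ∧ Delta n z = d} := by
  refine ⟨2 ^ (n * n), ?_⟩
  rintro d ⟨z, hadm, rfl⟩
  calc Delta n z ≤ ∏ p ∈ Finset.univ.filter (fun p : Fin n × Fin n => p.1 ≠ p.2), 2 := by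
        exact Finset.prod_le_prod (fun _ _ => dist_nonneg) (fun p _ => hadm _ _)
    _ = 2 ^ (Finset.univ.filter (fun p : Fin n × Fin n => p.1 ≠ p.2)).card := by
        rw [Finset.prod_const]
    _ ≤ 2 ^ (n * n) := by
        apply pow_le_pow_right₀ (by norm_num)
        calc (Finset.univ.filter (fun p : Fin n × Fin n => p.1 ≠ p.2)).card
            ≤ (Finset.univ : Finset (Fin n × Fin n)).card := Finset.card_filter_le _ _
          _ = n * n := by simp

lemma dmax_pos (n : ℕ) (hn : 2 ≤ n) : 0 < Dmax n := by
  set z0 : Fin n → ℂ := fun i => ((i : ℝ) / n : ℂ) with hz0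
  have hnpos : (0:ℝ) < n := by positivity
  have hinj : Function.Injective z0 := by
    intro i j hij
    simp only [hz0] at hij
    have : ((i:ℝ)/n) = ((j:ℝ)/n) := by exact_mod_cast hij
    have : (i:ℝ) = j := by field_simp at this; exact_mod_cast this
    exact Fin.ext (by exact_mod_cast this)
  have hadm : Admissible n z0 := by
    intro i j
    have h1 : (i:ℝ) < n := by exact_mod_cast i.is_lt
    have h2 : (j:ℝ) < n := by exact_mod_cast j.is_lt
    have h3 : (0:ℝ) ≤ (i:ℝ) := Nat.cast_nonneg _
    have h4 : (0:ℝ) ≤ (j:ℝ) := Nat.cast_nonneg _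
    have : dist (z0 i) (z0 j) = |(i:ℝ)/n - (j:ℝ)/n| := by
      simp only [hz0, Complex.dist_eq]
      rw [show (((i:ℝ):ℂ)/(n:ℂ) - ((j:ℝ):ℂ)/(n:ℂ)) = (((i:ℝ)/n - (j:ℝ)/n : ℝ) : ℂ) by
        push_cast; ring, Complex.norm_real, Real.norm_eq_abs]
    rw [this, abs_sub_le_iff]
    constructor <;> rw [div_sub_div_same, div_le_iff₀ hnpos] <;> nlinarith
  have hpos : 0 < Delta n z0 := by
    apply Finset.prod_pos
    intro p hp
    simp only [Finset.mem_filter] at hp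
    exact dist_pos.mpr (fun h => hp.2 (hinj h))
  have hle : Delta n z0 ≤ Dmax n := le_csSup (bddAboveSet n) ⟨z0, hadm, rfl⟩
  linarith

lemma delta_factor (n : ℕ) (z : Fin n → ℂ) (k : Fin n) :
    Delta n z = (∏ j ∈ Finset.univ.erase k, dist (z k) (z j)) ^ 2 *
      ∏ p ∈ Finset.univ.filter
        (fun p : Fin n × Fin n => p.1 ≠ p.2 ∧ p.1 ≠ k ∧ p.2 ≠ k), dist (z p.1) (z p.2) := by
  classical
  rw [Delta, ← Finset.prod_filter_mul_prod_filter_not _ (fun p : Fin n × Fin n => p.1 = k)]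
  rw [← Finset.prod_filter_mul_prod_filter_not
    ((Finset.univ.filter (fun p : Fin n × Fin n => p.1 ≠ p.2)).filter (fun p => ¬ p.1 = k))
    (fun p : Fin n × Fin n => p.2 = k)]
  have e1 : ∏ p ∈ (Finset.univ.filter (fun p : Fin n × Fin n => p.1 ≠ p.2)).filter
      (fun p => p.1 = k), dist (z p.1) (z p.2)
      = ∏ j ∈ Finset.univ.erase k, dist (z k) (z j) := by
    refine Finset.prod_bij' (fun p _ => p.2) (fun j _ => (k, j)) ?_ ?_ ?_ ?_ ?_
    · intro p hp
      simp only [Finset.mem_filter, Finset.mem_univ, true_and] at hp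
      refine Finset.mem_erase.mpr ⟨fun h => hp.1 ?_, Finset.mem_univ _⟩
      rw [hp.2]; exact h.symm
    · intro j hj
      simp only [Finset.mem_erase, Finset.mem_univ, and_true] at hj
      simp [Ne.symm hj]
    · intro p hp
      simp only [Finset.mem_filter, Finset.mem_univ, true_and] at hp
      exact Prod.ext hp.2.symm rfl
    · intro j hj; rfl
    · intro p hp
      simp only [Finset.mem_filter, Finset.mem_univ, true_and] at hp
      rw [hp.2]
  have e2 : ∏ p ∈ ((Finset.univ.filter (fun p : Fin n × Fin n => p.1 ≠ p.2)).filter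
      (fun p => ¬ p.1 = k)).filter (fun p => p.2 = k), dist (z p.1) (z p.2)
      = ∏ j ∈ Finset.univ.erase k, dist (z k) (z j) := by
    rw [show (∏ j ∈ Finset.univ.erase k, dist (z k) (z j))
        = ∏ j ∈ Finset.univ.erase k, dist (z j) (z k) from
      Finset.prod_congr rfl (fun j _ => dist_comm _ _)]
    refine Finset.prod_bij' (fun p _ => p.1) (fun j _ => (j, k)) ?_ ?_ ?_ ?_ ?_
    · intro p hp
      simp only [Finset.mem_filter, Finset.mem_univ, true_and] at hp
      exact Finset.mem_erase.mpr ⟨hp.1.2, Finset.mem_univ _⟩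
    · intro j hj
      simp only [Finset.mem_erase, Finset.mem_univ, and_true] at hj
      simp [hj]
    · intro p hp
      simp only [Finset.mem_filter, Finset.mem_univ, true_and] at hp
      exact Prod.ext rfl hp.2.symm
    · intro j hj; rfl
    · intro p hp
      simp only [Finset.mem_filter, Finset.mem_univ, true_and] at hp
      rw [hp.2]
  have e3 : ((Finset.univ.filter (fun p : Fin n × Fin n => p.1 ≠ p.2)).filter
      (fun p => ¬ p.1 = k)).filter (fun p => ¬ p.2 = k)
      = Finset.univ.filter
        (fun p : Fin n × Fin n => p.1 ≠ p.2 ∧ p.1 ≠ k ∧ p.2 ≠ k) := by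
    ext p
    simp only [Finset.mem_filter, Finset.mem_univ, true_and]
    tauto
  rw [e1, e2, e3]
  ring

theorem stmt3 (n : ℕ) (hn : 2 ≤ n) (z : Fin n → ℂ)
    (hadm : Admissible n z) (hmax : Delta n z = Dmax n) :
    ∀ k : Fin n, ∃ j : Fin n, j ≠ k ∧ dist (z k) (z j) = 2 := by
  classical
  intro k
  by_contra hcon
  push_neg at hcon
  have hlt2 : ∀ j : Fin n, j ≠ k → dist (z k) (z j) < 2 := by
    intro j hj
    exact lt_of_le_of_ne (hadm k j) (fun h => hcon j hj h)
  have hDpos : 0 < Delta n z := hmax ▸ dmax_pos n hn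
  have hdist_pos : ∀ i j : Fin n, i ≠ j → 0 < dist (z i) (z j) := by
    intro i j hij
    rcases lt_or_eq_of_le (dist_nonneg (x := z i) (y := z j)) with h | h
    · exact h
    · exfalso
      have : Delta n z = 0 := Finset.prod_eq_zero
        (Finset.mem_filter.mpr ⟨Finset.mem_univ (i, j), hij⟩) h.symm
      linarith
  -- the erase set is nonempty
  have hone : 1 < Fintype.card (Fin n) := by simp; omega
  obtain ⟨j0, hj0⟩ := Fintype.exists_ne_of_one_lt_card hone k
  have hne : (Finset.univ.erase k).Nonempty := ⟨j0, Finset.mem_erase.mpr ⟨hj0, Finset.mem_univ _⟩⟩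
  -- choose ε
  set ε : ℝ := (Finset.univ.erase k).inf' hne (fun j => 2 - dist (z k) (z j)) with hε
  have hεpos : 0 < ε := by
    rw [hε, Finset.lt_inf'_iff]
    intro j hj
    have := hlt2 j (Finset.mem_erase.mp hj).1
    linarith
  have hεle : ∀ j ∈ Finset.univ.erase k, ε ≤ 2 - dist (z k) (z j) :=
    fun j hj => Finset.inf'_le _ hj
  -- the polynomial function
  set f : ℂ → ℂ := fun w => ∏ j ∈ Finset.univ.erase k, (w - z j) with hf
  have hdiff : Differentiable ℂ f :=
    Differentiable.fun_finsetProd (fun j _ => (differentiable_id.sub_const _))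
  have hfk_ne : f (z k) ≠ 0 := by
    rw [hf]
    apply Finset.prod_ne_zero_iff.mpr
    intro j hj
    have := hdist_pos k j (Finset.mem_erase.mp hj).1.symm
    rw [Complex.dist_eq] at this
    exact fun h => by simp [h] at this
  -- find w with bigger |f|
  have hex : ∃ w ∈ closedBall (z k) ε, ‖f (z k)‖ < ‖f w‖ := by
    by_contra hno
    push_neg at hno
    have hmaxon : IsMaxOn (norm ∘ f) (ball (z k) ε) (z k) := by
      intro w hw
      exact hno w (ball_subset_closedBall hw)
    have heq : Set.EqOn f (Function.const ℂ (f (z k))) (ball (z k) ε) :=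
      Complex.eqOn_of_isPreconnected_of_isMaxOn_norm (convex_ball _ _).isPreconnected
        isOpen_ball hdiff.differentiableOn (mem_ball_self hεpos) hmaxon
    have hev : f =ᶠ[nhds (z k)] Function.const ℂ (f (z k)) :=
      Filter.eventuallyEq_of_mem (isOpen_ball.mem_nhds (mem_ball_self hεpos)) heq
    have han : AnalyticOnNhd ℂ f Set.univ :=
      hdiff.differentiableOn.analyticOnNhd isOpen_univ
    have hang : AnalyticOnNhd ℂ (Function.const ℂ (f (z k))) Set.univ :=
      fun x _ => analyticAt_const
    have hall : Set.EqOn f (Function.const ℂ (f (z k))) Set.univ :=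
      han.eqOn_of_preconnected_of_eventuallyEq hang isPreconnected_univ (Set.mem_univ (z k)) hev
    have h0 : f (z j0) = 0 := by
      rw [hf]
      exact Finset.prod_eq_zero (Finset.mem_erase.mpr ⟨hj0, Finset.mem_univ _⟩) (sub_self _)
    have := hall (Set.mem_univ (z j0))
    simp only [Function.const] at this
    exact hfk_ne (by rw [← this, h0])
  obtain ⟨w, hwball, hwgt⟩ := hex
  -- new configuration
  set z' : Fin n → ℂ := Function.update z k w with hz'
  have hz'k : z' k = w := Function.update_self _ _ _
  have hz'j : ∀ j : Fin n, j ≠ k → z' j = z j := fun j hj => Function.update_of_ne hj _ _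
  have hwdist : dist w (z k) ≤ ε := mem_closedBall.mp hwball
  have hadm' : Admissible n z' := by
    intro i j
    by_cases hi : i = k <;> by_cases hjk : j = k
    · rw [hi, hjk]; simp
    · rw [hi, hz'k, hz'j j hjk]
      calc dist w (z j) ≤ dist w (z k) + dist (z k) (z j) := dist_triangle _ _ _
        _ ≤ ε + dist (z k) (z j) := by linarith
        _ ≤ 2 := by
            have := hεle j (Finset.mem_erase.mpr ⟨hjk, Finset.mem_univ _⟩)
            linarith
    · rw [hjk, hz'k, hz'j i hi, dist_comm]
      calc dist w (z i) ≤ dist w (z k) + dist (z k) (z i) := dist_triangle _ _ _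
        _ ≤ ε + dist (z k) (z i) := by linarith
        _ ≤ 2 := by
            have := hεle i (Finset.mem_erase.mpr ⟨hi, Finset.mem_univ _⟩)
            linarith
    · rw [hz'j i hi, hz'j j hjk]; exact hadm i j
  -- compare Deltas
  have habs : ∀ v : ℂ, (∏ j ∈ Finset.univ.erase k, dist v (z j)) = ‖f v‖ := by
    intro v
    rw [hf, norm_prod]
    exact Finset.prod_congr rfl (fun j _ => Complex.dist_eq _ _)
  have hfac := delta_factor n z k
  have hfac' := delta_factor n z' k
  set R : ℝ := ∏ p ∈ Finset.univ.filter
    (fun p : Fin n × Fin n => p.1 ≠ p.2 ∧ p.1 ≠ k ∧ p.2 ≠ k), dist (z p.1) (z p.2) with hR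
  have hRsame : (∏ p ∈ Finset.univ.filter
      (fun p : Fin n × Fin n => p.1 ≠ p.2 ∧ p.1 ≠ k ∧ p.2 ≠ k), dist (z' p.1) (z' p.2)) = R := by
    apply Finset.prod_congr rfl
    intro p hp
    simp only [Finset.mem_filter] at hp
    rw [hz'j p.1 hp.2.2.1, hz'j p.2 hp.2.2.2]
  have hzkdist : (∏ j ∈ Finset.univ.erase k, dist (z k) (z j)) = ‖f (z k)‖ :=
    habs (z k)
  have hz'dist : (∏ j ∈ Finset.univ.erase k, dist (z' k) (z' j)) = ‖f w‖ := by
    rw [show (∏ j ∈ Finset.univ.erase k, dist (z' k) (z' j))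
        = ∏ j ∈ Finset.univ.erase k, dist w (z j) from
      Finset.prod_congr rfl (fun j hj => by
        rw [hz'k, hz'j j (Finset.mem_erase.mp hj).1]), habs w]
  have hDz : Delta n z = ‖f (z k)‖ ^ 2 * R := by rw [hfac, hzkdist]
  have hDz' : Delta n z' = ‖f w‖ ^ 2 * R := by rw [hfac', hz'dist, hRsame]
  have hRpos : 0 < R := by
    have hfk2 : (0:ℝ) < ‖f (z k)‖ ^ 2 := by
      have := norm_pos_iff.mpr hfk_ne
      positivity
    nlinarith [hDpos, hDz]
  have hgt : Delta n z < Delta n z' := by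
    rw [hDz, hDz']
    have h1 : (0:ℝ) ≤ ‖f (z k)‖ := norm_nonneg _
    have h2 : ‖f (z k)‖ ^ 2 < ‖f w‖ ^ 2 := by nlinarith
    exact mul_lt_mul_of_pos_right h2 hRpos
  have hle : Delta n z' ≤ Dmax n := le_csSup (bddAboveSet n) ⟨z', hadm', rfl⟩
  rw [hmax] at hgt
  linarith
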